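/- Let G be an infinite group. The following are equivalent: (a) the commuting graph of G has no infinite coclique, i.e., every subset of G whose elements pairwise do not commute is finite; (b) there is a finite upper bound n such that every set of pairwise non-commuting elements of G has size at most n; (c) the centre Z(G) has finite index in G. -/

import Mathlib

open SimpleGraph

/-- The power graph of a group: distinct `x`,`y` adjacent iff one is a power of the other. -/
def powGraph (G : Type*) [Group G] : SimpleGraph G where
  Adj x y := x ≠ y ∧ (x ∈ Subgroup.zpowers y ∨ y ∈ Subgroup.zpowers x)
  symm := ⟨fun _ _ h => ⟨h.1.symm, h.2.symm⟩⟩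
  loopless := ⟨fun _ h => h.1 rfl⟩

/-- The enhanced power graph of a group: distinct `x`,`y` adjacent iff `⟨x,y⟩` is cyclic. -/
def epowGraph (G : Type*) [Group G] : SimpleGraph G where
  Adj x y := x ≠ y ∧ IsCyclic (Subgroup.closure ({x, y} : Set G))
  symm := by
    refine ⟨?_⟩
    intro x y h
    refine ⟨h.1.symm, ?_⟩
    rw [Set.pair_comm]
    exact h.2
  loopless := ⟨fun _ h => h.1 rfl⟩

/-- The commuting graph of a group: distinct `x`,`y` adjacent iff `x*y = y*x`. -/
def comGraph (G : Type*) [Group G] : SimpleGraph G where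
  Adj x y := x ≠ y ∧ Commute x y
  symm := ⟨fun _ _ h => ⟨h.1.symm, h.2.symm⟩⟩
  loopless := ⟨fun _ h => h.1 rfl⟩

/-- The non-generating graph of a group: distinct `x`,`y` adjacent iff `⟨x,y⟩ ≠ G`. -/
def ngenGraph (G : Type*) [Group G] : SimpleGraph G where
  Adj x y := x ≠ y ∧ Subgroup.closure ({x, y} : Set G) ≠ ⊤
  symm := by
    refine ⟨?_⟩
    intro x y h
    refine ⟨h.1.symm, ?_⟩
    rw [Set.pair_comm]
    exact h.2
  loopless := ⟨fun _ h => h.1 rfl⟩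

/-- The generating graph of a group: distinct `x`,`y` adjacent iff `⟨x,y⟩ = G`. -/
def genGraph (G : Type*) [Group G] : SimpleGraph G where
  Adj x y := x ≠ y ∧ Subgroup.closure ({x, y} : Set G) = ⊤
  symm := by
    refine ⟨?_⟩
    intro x y h
    refine ⟨h.1.symm, ?_⟩
    rw [Set.pair_comm]
    exact h.2
  loopless := ⟨fun _ h => h.1 rfl⟩

section NeumannAux

open Subgroup
open scoped Pointwise

variable {G' : Type*} [Group G']

private lemma commute_cancel_right {x a b : G'} (h : Commute x (a * b)) (ha : Commute x a) :
    Commute x b := by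
  have key : a * (x * b) = a * (b * x) := by
    calc a * (x * b) = (x * a) * b := by rw [← mul_assoc, ← ha.eq]
      _ = x * (a * b) := by rw [mul_assoc]
      _ = (a * b) * x := h.eq
      _ = a * (b * x) := by rw [mul_assoc]
  exact mul_left_cancel key

private lemma commute_cancel_left {x a b : G'} (h : Commute x (a * b)) (hb : Commute x b) :
    Commute x a := by
  have key : (x * a) * b = (a * x) * b := by
    calc (x * a) * b = x * (a * b) := by rw [mul_assoc]
      _ = (a * b) * x := h.eq
      _ = a * (b * x) := by rw [mul_assoc]
      _ = a * (x * b) := by rw [← hb.eq]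
      _ = (a * x) * b := by rw [mul_assoc]
  exact mul_right_cancel key

/-- If every pairwise non-commuting set is finite, then every centralizer has finite index. -/
private lemma centralizer_finiteIndex_of_noInfinite
    (hA : ∀ S : Set G', S.Pairwise (fun x y => ¬ Commute x y) → S.Finite) (a : G') :
    (Subgroup.centralizer {a}).FiniteIndex := by
  classical
  obtain ⟨M, haMsub, hM⟩ := zorn_subset_nonempty
      {T : Set G' | a ∈ T ∧ T.Pairwise fun x y => ¬ Commute x y}
      (fun c hcS hchain hcne => by
        refine ⟨⋃₀ c, ⟨?_, ?_⟩, fun s hs => Set.subset_sUnion_of_mem hs⟩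
        · obtain ⟨t, ht⟩ := hcne
          exact Set.mem_sUnion.mpr ⟨t, ht, (hcS ht).1⟩
        · intro x hx y hy hxy
          obtain ⟨s, hs, hxs⟩ := hx
          obtain ⟨t, ht, hyt⟩ := hy
          rcases hchain.total hs ht with h | h
          · exact (hcS ht).2 (h hxs) hyt hxy
          · exact (hcS hs).2 hxs (h hyt) hxy)
      {a} ⟨rfl, Set.pairwise_singleton _ _⟩
  obtain ⟨haM, hMpw⟩ := hM.1
  have hMfin : M.Finite := hA M hMpw
  have hcov : ∀ g : G', ∃ x ∈ M, Commute x g := by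
    intro g
    by_contra hcon
    push_neg at hcon
    have hgM : g ∉ M := fun hg => hcon g hg (Commute.refl g)
    have hmem : insert g M ∈ {T : Set G' | a ∈ T ∧ T.Pairwise fun x y => ¬ Commute x y} := by
      refine ⟨Set.mem_insert_of_mem _ haM, ?_⟩
      refine (Set.pairwise_insert (r := fun x y : G' => ¬ Commute x y)).2
        ⟨hMpw, fun x hx _ => ⟨fun hc => hcon x hx hc.symm, fun hc => hcon x hx hc⟩⟩
    exact hgM (hM.2 hmem (Set.subset_insert g M) (Set.mem_insert g M))
  letI : DecidablePred (Subgroup.FiniteIndex : Subgroup G' → Prop) := Classical.decPred _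
  have hcovers : ⋃ x ∈ hMfin.toFinset, (fun _ : G' => (1 : G')) x •
      ((fun x : G' => (centralizer {x} : Subgroup G')) x : Set G') = Set.univ := by
    rw [Set.eq_univ_iff_forall]
    intro g
    obtain ⟨x, hx, hc⟩ := hcov g
    refine Set.mem_biUnion (hMfin.mem_toFinset.mpr hx) ?_
    simp only [one_smul, SetLike.mem_coe]
    exact mem_centralizer_iff.mpr fun h hh => by
      rw [Set.mem_singleton_iff] at hh; subst hh; exact hc.eq
  have hfiltered := Subgroup.leftCoset_cover_filter_FiniteIndex hcovers
  have haU : a ∈ ⋃ x ∈ hMfin.toFinset.filter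
      (fun i => (centralizer {i} : Subgroup G').FiniteIndex),
      (fun _ : G' => (1 : G')) x • ((fun x : G' => (centralizer {x} : Subgroup G')) x : Set G') :=
    hfiltered.symm ▸ Set.mem_univ a
  simp only [Set.mem_iUnion, one_smul, SetLike.mem_coe, Finset.mem_filter,
    hMfin.mem_toFinset, exists_prop] at haU
  obtain ⟨x, ⟨hxM, hxfi⟩, hax⟩ := haU
  have hcomm : Commute x a := (mem_centralizer_iff.mp hax) x rfl
  by_cases hxa : x = a
  · exact hxa ▸ hxfi
  · exact absurd hcomm (hMpw hxM haM hxa)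

/-- If some finite-index subgroup is abelian and all centralizers have finite index,
then the center has finite index. -/
private lemma center_finiteIndex_of_abelian_finiteIndex
    (hFC : ∀ a : G', (Subgroup.centralizer {a}).FiniteIndex)
    (H : Subgroup G') (hH : H.FiniteIndex)
    (hab : ∀ x ∈ H, ∀ y ∈ H, Commute x y) : (Subgroup.center G').FiniteIndex := by
  haveI := hH
  haveI : Finite (G' ⧸ H) := H.finite_quotient_of_finiteIndex
  haveI : (⨅ q : G' ⧸ H, centralizer ({(Quotient.out q : G')} : Set G')).FiniteIndex :=
    Subgroup.finiteIndex_iInf fun _ => hFC _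
  haveI hK : (H ⊓ ⨅ q : G' ⧸ H, centralizer {(Quotient.out q : G')}).FiniteIndex :=
    inferInstance
  refine Subgroup.finiteIndex_of_le (H := H ⊓ ⨅ q : G' ⧸ H, centralizer {(Quotient.out q : G')}) ?_
  intro k hk
  rw [Subgroup.mem_inf] at hk
  obtain ⟨hkH, hkC⟩ := hk
  rw [Subgroup.mem_center_iff]
  intro g
  have hout : (Quotient.out (QuotientGroup.mk g : G' ⧸ H))⁻¹ * g ∈ H := by
    rw [← QuotientGroup.eq]
    exact QuotientGroup.out_eq' _
  have h1 : Commute k (Quotient.out (QuotientGroup.mk g : G' ⧸ H)) := by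
    have hm := Subgroup.mem_iInf.mp hkC (QuotientGroup.mk g : G' ⧸ H)
    have hm' : Commute (Quotient.out (QuotientGroup.mk g : G' ⧸ H)) k :=
      (mem_centralizer_iff.mp hm) _ rfl
    exact hm'.symm
  have h2 : Commute k ((Quotient.out (QuotientGroup.mk g : G' ⧸ H))⁻¹ * g) :=
    hab k hkH _ hout
  have hkg : Commute k g := by
    have := h1.mul_right h2
    rwa [mul_inv_cancel_left] at this
  exact hkg.eq.symm

/-- The hard direction of Neumann's theorem. -/
private lemma center_finiteIndex_of_noInfinite
    (hA : ∀ S : Set G', S.Pairwise (fun x y => ¬ Commute x y) → S.Finite) :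
    (Subgroup.center G').FiniteIndex := by
  classical
  have hFC := centralizer_finiteIndex_of_noInfinite hA
  by_contra hZ
  have hstep : ∀ H : Subgroup G', H.FiniteIndex → ∃ u v : G', u ∈ H ∧ v ∈ H ∧ ¬ Commute u v := by
    intro H hH
    by_contra hcon
    push_neg at hcon
    exact hZ (center_finiteIndex_of_abelian_finiteIndex hFC H hH
      fun x hx y hy => hcon x y hx hy)
  have hnext : ∀ H : Subgroup G', H.FiniteIndex →
      ∃ p : G' × G' × Subgroup G', p.1 ∈ H ∧ p.2.1 ∈ H ∧ ¬ Commute p.1 p.2.1 ∧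
        p.2.2.FiniteIndex ∧ p.2.2 ≤ H ∧
        p.2.2 ≤ centralizer {p.1} ∧ p.2.2 ≤ centralizer {p.2.1} := by
    intro H hH
    obtain ⟨u, v, hu, hv, huv⟩ := hstep H hH
    haveI := hH; haveI := hFC u; haveI := hFC v
    exact ⟨⟨u, v, H ⊓ centralizer {u} ⊓ centralizer {v}⟩, hu, hv, huv, inferInstance,
      inf_le_left.trans inf_le_left, inf_le_left.trans inf_le_right, inf_le_right⟩
  let next : {H : Subgroup G' // H.FiniteIndex} → G' × G' × {H : Subgroup G' // H.FiniteIndex} :=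
    fun H => ⟨(hnext H.1 H.2).choose.1, (hnext H.1 H.2).choose.2.1,
      (hnext H.1 H.2).choose.2.2, (hnext H.1 H.2).choose_spec.2.2.2.1⟩
  let F : ℕ → {H : Subgroup G' // H.FiniteIndex} :=
    fun n => Nat.rec ⟨⊤, inferInstance⟩ (fun _ Hn => (next Hn).2.2) n
  let u : ℕ → G' := fun n => (next (F n)).1
  let v : ℕ → G' := fun n => (next (F n)).2.1
  have hspec : ∀ n, u n ∈ (F n).1 ∧ v n ∈ (F n).1 ∧ ¬ Commute (u n) (v n) ∧
      (F (n+1)).1 ≤ (F n).1 ∧ (F (n+1)).1 ≤ centralizer {u n} ∧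
      (F (n+1)).1 ≤ centralizer {v n} := by
    intro n
    have h := (hnext (F n).1 (F n).2).choose_spec
    exact ⟨h.1, h.2.1, h.2.2.1, h.2.2.2.2.1, h.2.2.2.2.2.1, h.2.2.2.2.2.2⟩
  have hmono : ∀ m n : ℕ, m ≤ n → (F n).1 ≤ (F m).1 := by
    intro m n h
    induction h with
    | refl => exact le_rfl
    | step _ ih => exact le_trans (hspec _).2.2.2.1 ih
  have hcmm : ∀ m n : ℕ, m < n → Commute (u m) (u n) ∧ Commute (u m) (v n) ∧
      Commute (v m) (u n) ∧ Commute (v m) (v n) := by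
    intro m n hmn
    have hle : (F n).1 ≤ (F (m+1)).1 := hmono (m+1) n hmn
    have hu : u n ∈ (F n).1 := (hspec n).1
    have hv : v n ∈ (F n).1 := (hspec n).2.1
    have hcu := (hspec m).2.2.2.2.1
    have hcv := (hspec m).2.2.2.2.2
    exact ⟨(mem_centralizer_iff.mp (hcu (hle hu)) _ rfl),
      (mem_centralizer_iff.mp (hcu (hle hv)) _ rfl),
      (mem_centralizer_iff.mp (hcv (hle hu)) _ rfl),
      (mem_centralizer_iff.mp (hcv (hle hv)) _ rfl)⟩
  let Pseg : ℕ → ℕ → G' := fun a => Nat.rec 1 (fun k pk => pk * u (a + k))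
  have hPseg_succ : ∀ a k, Pseg a (k+1) = Pseg a k * u (a+k) := fun _ _ => rfl
  have hPseg_add : ∀ a k l, Pseg a (k + l) = Pseg a k * Pseg (a+k) l := by
    intro a k l
    induction l with
    | zero => exact (mul_one _).symm
    | succ l ih =>
      calc Pseg a ((k+l)+1) = Pseg a (k+l) * u (a+(k+l)) := rfl
        _ = Pseg a k * Pseg (a+k) l * u ((a+k)+l) := by rw [ih, add_assoc]
        _ = Pseg a k * (Pseg (a+k) l * u ((a+k)+l)) := mul_assoc _ _ _
        _ = Pseg a k * Pseg (a+k) (l+1) := rfl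
  have hPseg_comm : ∀ (w : G') (a k : ℕ), (∀ j, a ≤ j → j < a + k → Commute w (u j)) →
      Commute w (Pseg a k) := by
    intro w a k hw
    induction k with
    | zero => exact Commute.one_right w
    | succ k ih =>
      exact (ih fun j h1 h2 => hw j h1 (by omega)).mul_right (hw (a+k) (by omega) (by omega))
  let t : ℕ → G' := fun n => Pseg 0 n * v n
  have hmain : ∀ m n : ℕ, m < n → ¬ Commute (t m) (t n) := by
    intro m n hmn hc
    obtain ⟨k, rfl⟩ : ∃ k, n = (m + 1) + k := ⟨n - (m+1), by omega⟩
    have hum_vm : ¬ Commute (u m) (v m) := (hspec m).2.2.1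
    have hsplit : Pseg 0 (m+1+k) = Pseg 0 m * u m * Pseg (m+1) k := by
      rw [hPseg_add 0 (m+1) k, hPseg_succ 0 m, Nat.zero_add, Nat.zero_add]
    have hPw : ∀ w : G', (∀ i, i < m → Commute (u i) w) → Commute (Pseg 0 m) w := by
      intro w hw
      exact (hPseg_comm w 0 m fun j _ h2 => (hw j (by omega)).symm).symm
    have hPum : Commute (Pseg 0 m) (u m) := hPw _ fun i hi => (hcmm i m hi).1
    have hPvm : Commute (Pseg 0 m) (v m) := hPw _ fun i hi => (hcmm i m hi).2.1
    have humR : Commute (u m) (Pseg (m+1) k * v (m+1+k)) :=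
      (hPseg_comm (u m) (m+1) k fun j h1 _ => (hcmm m j (by omega)).1).mul_right
        (hcmm m (m+1+k) (by omega)).2.1
    have hvmR : Commute (v m) (Pseg (m+1) k * v (m+1+k)) :=
      (hPseg_comm (v m) (m+1) k fun j h1 _ => (hcmm m j (by omega)).2.2.1).mul_right
        (hcmm m (m+1+k) (by omega)).2.2.2
    have hPR : Commute (Pseg 0 m) (Pseg (m+1) k * v (m+1+k)) := by
      refine hPw _ fun i hi => ?_
      exact (hPseg_comm (u i) (m+1) k fun j h1 _ => (hcmm i j (by omega)).1).mul_right
        (hcmm i (m+1+k) (by omega)).2.1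
    have ht_n : t (m+1+k) = Pseg 0 m * (u m * (Pseg (m+1) k * v (m+1+k))) := by
      show Pseg 0 (m+1+k) * v (m+1+k) = _
      rw [hsplit, mul_assoc (Pseg 0 m * u m), mul_assoc (Pseg 0 m)]
    have ht_m : t m = Pseg 0 m * v m := rfl
    rw [ht_m, ht_n] at hc
    have c1 : Commute (Pseg 0 m * v m) (Pseg 0 m) :=
      Commute.mul_left (Commute.refl _) hPvm.symm
    have c2 : Commute (Pseg 0 m * v m) (u m * (Pseg (m+1) k * v (m+1+k))) :=
      commute_cancel_right hc c1
    have c3 : Commute (Pseg 0 m * v m) (Pseg (m+1) k * v (m+1+k)) :=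
      Commute.mul_left hPR hvmR
    have c4 : Commute (Pseg 0 m * v m) (u m) := commute_cancel_left c2 c3
    exact hum_vm (commute_cancel_right c4.symm hPum.symm)
  have hinj : Function.Injective t := by
    intro m n hmn
    by_contra hne
    have hcm : Commute (t m) (t n) := by rw [hmn]
    rcases lt_or_gt_of_ne hne with h | h
    · exact hmain m n h hcm
    · exact hmain n m h hcm.symm
  have hpw : (Set.range t).Pairwise fun x y => ¬ Commute x y := by
    rintro x ⟨m, rfl⟩ y ⟨n, rfl⟩ hne
    rcases lt_trichotomy m n with h | h | h
    · exact hmain m n h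
    · exact absurd (congrArg t h) hne
    · exact fun hcomm => hmain n m h hcomm.symm
  exact Set.infinite_range_of_injective hinj (hA _ hpw)

end NeumannAux

/-- B. H. Neumann: For an infinite group `G`, the following are equivalent:
(a) the commuting graph of `G` has no infinite coclique (every set of pairwise non-commuting
elements is finite); (b) there is a finite bound on the size of sets of pairwise non-commuting
elements; (c) the centre of `G` has finite index. -/
theorem neumann_commuting_coclique (G : Type*) [Group G] [Infinite G] :
    ((∀ S : Set G, S.Pairwise (fun x y => ¬ Commute x y) → S.Finite) ↔
      (Subgroup.center G).FiniteIndex) ∧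
    ((∃ n : ℕ, ∀ S : Finset G, (S : Set G).Pairwise (fun x y => ¬ Commute x y) → S.card ≤ n) ↔
      (Subgroup.center G).FiniteIndex) := by
  classical
  have hbc : (Subgroup.center G).FiniteIndex →
      ∃ n : ℕ, ∀ S : Finset G, (S : Set G).Pairwise (fun x y => ¬ Commute x y) → S.card ≤ n := by
    intro hfi
    haveI := hfi
    refine ⟨(Subgroup.center G).index, fun S hS => ?_⟩
    haveI : Fintype (G ⧸ Subgroup.center G) :=
      (Subgroup.center G).fintypeQuotientOfFiniteIndex
    have hinj : Set.InjOn (QuotientGroup.mk : G → G ⧸ Subgroup.center G) S := by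
      intro x hx y hy hxy
      by_contra hne
      have hz : x⁻¹ * y ∈ Subgroup.center G := QuotientGroup.eq.mp hxy
      have hcomm : Commute x y := by
        have h1 : Commute x (x⁻¹ * y) := (Subgroup.mem_center_iff.mp hz x)
        have h2 := (Commute.refl x).mul_right h1
        rwa [mul_inv_cancel_left] at h2
      exact (hS hx hy hne) hcomm
    calc S.card = (S.image (QuotientGroup.mk : G → G ⧸ Subgroup.center G)).card :=
          (Finset.card_image_of_injOn hinj).symm
      _ ≤ Fintype.card (G ⧸ Subgroup.center G) := Finset.card_le_univ _
      _ = Nat.card (G ⧸ Subgroup.center G) := Nat.card_eq_fintype_card.symm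
      _ = (Subgroup.center G).index := (Subgroup.index_eq_card _).symm
  have hba : (∃ n : ℕ, ∀ S : Finset G, (S : Set G).Pairwise (fun x y => ¬ Commute x y) →
      S.card ≤ n) →
      ∀ S : Set G, S.Pairwise (fun x y => ¬ Commute x y) → S.Finite := by
    rintro ⟨n, hn⟩ S hS
    by_contra hinf
    obtain ⟨T, hTsub, hTcard⟩ := (show S.Infinite from hinf).exists_subset_card_eq (n + 1)
    have := hn T (hS.mono hTsub)
    omega
  constructor
  · exact ⟨fun h => center_finiteIndex_of_noInfinite h, fun h => hba (hbc h)⟩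
  · exact ⟨fun h => center_finiteIndex_of_noInfinite (hba h), hbc⟩
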